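/- Let μ > 0. Then lim_{T→∞} √T · ∫_ℝ tanh((q²−μ)/(2T))/(q²−μ) dq = ∫_ℝ tanh(q²/2)/q² dq, where both integrands are extended continuously at their removable singularities. Equivalently, lim_{T→∞} T^{1/2}·a_{T,μ} = a_{1,0}. -/

import Mathlib

open MeasureTheory Real Filter

/-- The function `L_{T,μ}(p,q)`, extended continuously across `p²+q² = 2μ`. -/
noncomputable def Lfun (T μ p q : ℝ) : ℝ :=
  if p ^ 2 + q ^ 2 = 2 * μ then (1 - Real.tanh ((p ^ 2 - μ) / (2 * T)) ^ 2) / (2 * T)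
  else (Real.tanh ((p ^ 2 - μ) / (2 * T)) + Real.tanh ((q ^ 2 - μ) / (2 * T))) /
    (p ^ 2 + q ^ 2 - 2 * μ)

/-- `B_{T,μ}(p,q) = L_{T,μ}((p+q)/2, (p−q)/2)`. -/
noncomputable def Bfun (T μ p q : ℝ) : ℝ := Lfun T μ ((p + q) / 2) ((p - q) / 2)

/-- `F_{T,μ}(p) = tanh((p²−μ)/(2T))/(p²−μ)`, extended by `1/(2T)` at `p² = μ`. -/
noncomputable def Ffun (T μ p : ℝ) : ℝ :=
  if p ^ 2 = μ then 1 / (2 * T) else Real.tanh ((p ^ 2 - μ) / (2 * T)) / (p ^ 2 - μ)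

/-- `a_{T,μ} = (1/(4π)) ∫ B_{T,μ}(0,q) dq`. -/
noncomputable def aconst (T μ : ℝ) : ℝ := (1 / (4 * Real.pi)) * ∫ q : ℝ, Bfun T μ 0 q

/-- `A_{T,μ}(p) = (1/(4π)) ∫ B_{T,μ}(p,q) dq`. -/
noncomputable def Afun (T μ p : ℝ) : ℝ := (1 / (4 * Real.pi)) * ∫ q : ℝ, Bfun T μ p q

/-! ### Auxiliary lemmas about `tanh` -/

lemma my_abs_sinh_lt_cosh (t : ℝ) : |Real.sinh t| < Real.cosh t := by
  have h := Real.cosh_sq t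
  have hc : 0 < Real.cosh t := Real.cosh_pos t
  nlinarith [abs_nonneg (Real.sinh t), sq_abs (Real.sinh t)]

lemma my_abs_tanh_le_one (t : ℝ) : |Real.tanh t| ≤ 1 := by
  rw [Real.tanh_eq_sinh_div_cosh, abs_div, abs_of_pos (Real.cosh_pos t)]
  exact (div_le_one (Real.cosh_pos t)).2 (my_abs_sinh_lt_cosh t).le

lemma my_sinh_le_mul_cosh {t : ℝ} (ht : 0 ≤ t) : Real.sinh t ≤ t * Real.cosh t := by
  have key : ∀ x : ℝ, HasDerivAt (fun s => s * Real.cosh s - Real.sinh s)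
      (x * Real.sinh x) x := by
    intro x
    have h := ((hasDerivAt_id x).mul (Real.hasDerivAt_cosh x)).sub (Real.hasDerivAt_sinh x)
    exact h.congr_deriv (by simp)
  have hmono : MonotoneOn (fun s => s * Real.cosh s - Real.sinh s) (Set.Ici 0) := by
    apply monotoneOn_of_deriv_nonneg (convex_Ici 0)
    · exact ((continuous_id.mul Real.continuous_cosh).sub Real.continuous_sinh).continuousOn
    · exact fun x _ => (key x).differentiableAt.differentiableWithinAt
    · intro x hx
      rw [interior_Ici] at hx
      rw [(key x).deriv]
      exact mul_nonneg (le_of_lt hx) (Real.sinh_nonneg_iff.2 (le_of_lt hx))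
  have h0 := hmono Set.self_mem_Ici (Set.mem_Ici.2 ht) ht
  simp only [Real.sinh_zero, Real.cosh_zero, zero_mul, sub_zero, zero_sub, neg_zero] at h0
  linarith

lemma my_tanh_le_self {t : ℝ} (ht : 0 ≤ t) : Real.tanh t ≤ t := by
  rw [Real.tanh_eq_sinh_div_cosh, div_le_iff₀ (Real.cosh_pos t)]
  exact my_sinh_le_mul_cosh ht

lemma my_abs_tanh_le_self (t : ℝ) : |Real.tanh t| ≤ |t| := by
  rcases le_total 0 t with ht | ht
  · rw [abs_of_nonneg ht, abs_of_nonneg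
      (by rw [Real.tanh_eq_sinh_div_cosh]; exact div_nonneg (Real.sinh_nonneg_iff.2 ht) (Real.cosh_pos t).le)]
    exact my_tanh_le_self ht
  · have ht' : 0 ≤ -t := by linarith
    have := my_tanh_le_self ht'
    rw [abs_of_nonpos ht, abs_of_nonpos
      (by rw [Real.tanh_eq_sinh_div_cosh]
          exact div_nonpos_of_nonpos_of_nonneg (Real.sinh_nonpos_iff.2 ht) (Real.cosh_pos t).le)]
    rw [← Real.tanh_neg]
    exact this

lemma my_continuous_tanh : Continuous Real.tanh := by
  have : Real.tanh = fun x => Real.sinh x / Real.cosh x := funext Real.tanh_eq_sinh_div_cosh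
  rw [this]
  exact Real.continuous_sinh.div Real.continuous_cosh fun x => (Real.cosh_pos x).ne'

/-! ### Bounds on `Ffun 1 ε` -/

lemma Ffun_one_bound {ε : ℝ} (h0 : 0 ≤ ε) (h1 : ε ≤ 1) (x : ℝ) :
    |Ffun 1 ε x| ≤ 2 * (1 + x ^ 2)⁻¹ := by
  have hpos : (0:ℝ) < 1 + x ^ 2 := by positivity
  by_cases hc : x ^ 2 ≤ 3
  · have hhalf : |Ffun 1 ε x| ≤ 1 / 2 := by
      unfold Ffun
      split
      · rw [abs_of_nonneg (by norm_num)]; norm_num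
      · rename_i hne
        have hy : x ^ 2 - ε ≠ 0 := sub_ne_zero.2 hne
        rw [abs_div, div_le_div_iff₀ (abs_pos.2 hy) two_pos]
        have h2 : |Real.tanh ((x ^ 2 - ε) / (2 * 1))| ≤ |x ^ 2 - ε| / 2 := by
          have := my_abs_tanh_le_self ((x ^ 2 - ε) / (2 * 1))
          calc |Real.tanh ((x ^ 2 - ε) / (2 * 1))| ≤ |(x ^ 2 - ε) / (2 * 1)| := this
            _ = |x ^ 2 - ε| / 2 := by rw [abs_div]; norm_num
        linarith
    have h2 : (1:ℝ) / 2 ≤ 2 / (1 + x ^ 2) := by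
      rw [div_le_div_iff₀ two_pos hpos]; nlinarith
    calc |Ffun 1 ε x| ≤ 1 / 2 := hhalf
      _ ≤ 2 / (1 + x ^ 2) := h2
      _ = 2 * (1 + x ^ 2)⁻¹ := by rw [div_eq_mul_inv]
  · push_neg at hc
    have hy : (1 + x ^ 2) / 2 ≤ x ^ 2 - ε := by linarith
    have hypos : 0 < x ^ 2 - ε := lt_of_lt_of_le (by positivity) hy
    have hne : x ^ 2 ≠ ε := by intro h; rw [h] at hypos; simp at hypos
    unfold Ffun
    rw [if_neg hne, abs_div, abs_of_pos hypos]
    calc |Real.tanh ((x ^ 2 - ε) / (2 * 1))| / (x ^ 2 - ε)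
        ≤ 1 / ((1 + x ^ 2) / 2) :=
          div_le_div₀ zero_le_one (my_abs_tanh_le_one _) (by positivity) hy
      _ = 2 * (1 + x ^ 2)⁻¹ := by rw [one_div_div, div_eq_mul_inv]

lemma Ffun_one_aesm (ε : ℝ) : AEStronglyMeasurable (Ffun 1 ε) volume := by
  apply Measurable.aestronglyMeasurable
  unfold Ffun
  apply Measurable.ite
  · exact measurableSet_eq_fun (by fun_prop) measurable_const
  · exact measurable_const
  · exact (my_continuous_tanh.measurable.comp (by fun_prop)).div (by fun_prop)

/-! ### Scaling -/

lemma Ffun_scale {T : ℝ} (hT : 0 < T) (μ x : ℝ) :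
    Ffun T μ (Real.sqrt T * x) = T⁻¹ * Ffun 1 (μ / T) x := by
  have hsq : (Real.sqrt T * x) ^ 2 = T * x ^ 2 := by
    rw [mul_pow, Real.sq_sqrt hT.le]
  unfold Ffun
  rw [hsq]
  have hcond : (T * x ^ 2 = μ) ↔ (x ^ 2 = μ / T) := by
    rw [eq_div_iff hT.ne']
    constructor <;> intro h <;> linarith
  by_cases h : x ^ 2 = μ / T
  · rw [if_pos (hcond.2 h), if_pos h]
    field_simp
  · rw [if_neg (fun hh => h (hcond.1 hh)), if_neg h]
    have hne : x ^ 2 - μ / T ≠ 0 := sub_ne_zero.2 h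
    have harg : (T * x ^ 2 - μ) / (2 * T) = (x ^ 2 - μ / T) / (2 * 1) := by
      field_simp
    rw [harg]
    have hden : T * x ^ 2 - μ = T * (x ^ 2 - μ / T) := by
      field_simp
    rw [hden]
    field_simp

lemma key_eq {T : ℝ} (hT : 0 < T) (μ : ℝ) :
    Real.sqrt T * ∫ q : ℝ, Ffun T μ q = ∫ q : ℝ, Ffun 1 (μ / T) q := by
  have hs : 0 < Real.sqrt T := Real.sqrt_pos.2 hT
  have h := MeasureTheory.Measure.integral_comp_mul_left (Ffun T μ) (Real.sqrt T)
  rw [abs_of_pos (inv_pos.2 hs), smul_eq_mul] at h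
  have h2 : ∫ x : ℝ, Ffun T μ (Real.sqrt T * x) = T⁻¹ * ∫ x : ℝ, Ffun 1 (μ / T) x := by
    simp_rw [Ffun_scale hT]
    exact integral_const_mul _ _
  have hI : ∫ q : ℝ, Ffun T μ q = Real.sqrt T * (T⁻¹ * ∫ x : ℝ, Ffun 1 (μ / T) x) := by
    rw [← h2, h, ← mul_assoc, mul_inv_cancel₀ hs.ne', one_mul]
  rw [hI, show Real.sqrt T * (Real.sqrt T * (T⁻¹ * ∫ x : ℝ, Ffun 1 (μ / T) x))
      = (Real.sqrt T * Real.sqrt T) * T⁻¹ * ∫ x : ℝ, Ffun 1 (μ / T) x from by ring,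
    Real.mul_self_sqrt hT.le, mul_inv_cancel₀ hT.ne', one_mul]

/-! ### Pointwise limit -/

lemma limit_ptwise (μ : ℝ) (hμ : 0 < μ) {x : ℝ} (hx : x ≠ 0) :
    Tendsto (fun T : ℝ => Ffun 1 (μ / T) x) atTop (nhds (Ffun 1 0 x)) := by
  have hx2 : 0 < x ^ 2 := by positivity
  have hT0 : Tendsto (fun T : ℝ => μ / T) atTop (nhds 0) :=
    tendsto_const_nhds.div_atTop tendsto_id
  have hc : ContinuousAt (fun ε : ℝ => Real.tanh ((x ^ 2 - ε) / (2 * 1)) / (x ^ 2 - ε)) 0 := by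
    apply ContinuousAt.div
    · exact (my_continuous_tanh.comp (by fun_prop)).continuousAt
    · fun_prop
    · simpa using hx2.ne'
  have hlim := hc.tendsto.comp hT0
  have h0 : Ffun 1 0 x = Real.tanh ((x ^ 2 - 0) / (2 * 1)) / (x ^ 2 - 0) := by
    unfold Ffun
    rw [if_neg hx2.ne']
  rw [h0]
  apply Tendsto.congr' _ hlim
  have hev : ∀ᶠ T in atTop, μ / T < x ^ 2 := hT0.eventually_lt_const hx2
  filter_upwards [hev] with T hT
  unfold Ffun
  rw [if_neg (ne_of_gt hT)]
  rfl

theorem sqrtT_intF_tendsto (μ : ℝ) (hμ : 0 < μ) :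
    Tendsto (fun T : ℝ => Real.sqrt T * ∫ q : ℝ, Ffun T μ q) atTop
      (nhds (∫ q : ℝ, Ffun 1 0 q)) := by
  have hae : ∀ᵐ x : ℝ, x ≠ 0 := by
    have hset : {x : ℝ | ¬ x ≠ 0} = {0} := by ext y; simp
    rw [ae_iff, hset]
    exact measure_singleton 0
  have key : Tendsto (fun T : ℝ => ∫ q : ℝ, Ffun 1 (μ / T) q) atTop
      (nhds (∫ q : ℝ, Ffun 1 0 q)) := by
    apply tendsto_integral_filter_of_dominated_convergence (fun x : ℝ => 2 * (1 + x ^ 2)⁻¹)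
    · exact Eventually.of_forall fun T => Ffun_one_aesm _
    · filter_upwards [eventually_ge_atTop (max μ 1)] with T hT
      apply Eventually.of_forall
      intro x
      have hT1 : (1:ℝ) ≤ T := le_trans (le_max_right _ _) hT
      have hTμ : μ ≤ T := le_trans (le_max_left _ _) hT
      have h0 : 0 ≤ μ / T := div_nonneg hμ.le (by linarith)
      have h1 : μ / T ≤ 1 := (div_le_one (by linarith)).2 hTμ
      simpa [Real.norm_eq_abs] using Ffun_one_bound h0 h1 x
    · exact integrable_inv_one_add_sq.const_mul 2
    · filter_upwards [hae] with x hx using limit_ptwise μ hμ hx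
  apply Tendsto.congr' _ key
  filter_upwards [eventually_gt_atTop (0:ℝ)] with T hT
  exact (key_eq hT μ).symm
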